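/- The Goldner–Harary graph is not Hamiltonian. -/

import Mathlib

/-- The Goldner–Harary graph on 11 vertices and 27 edges: the triangle `0,1,2`,
the two apexes `3` and `4` of the bipyramid (each adjacent to `0,1,2`), and six
stellation vertices `5,...,10`, one over each face of the bipyramid. -/
def goldnerHarary : SimpleGraph (Fin 11) :=
  SimpleGraph.fromRel (fun u v =>
    (u = 0 ∧ v = 1) ∨ (u = 1 ∧ v = 2) ∨ (u = 2 ∧ v = 0) ∨
    (u = 3 ∧ (v = 0 ∨ v = 1 ∨ v = 2)) ∨
    (u = 4 ∧ (v = 0 ∨ v = 1 ∨ v = 2)) ∨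
    (u = 5 ∧ (v = 0 ∨ v = 1 ∨ v = 3)) ∨
    (u = 6 ∧ (v = 1 ∨ v = 2 ∨ v = 3)) ∨
    (u = 7 ∧ (v = 2 ∨ v = 0 ∨ v = 3)) ∨
    (u = 8 ∧ (v = 0 ∨ v = 1 ∨ v = 4)) ∨
    (u = 9 ∧ (v = 1 ∨ v = 2 ∨ v = 4)) ∨
    (u = 10 ∧ (v = 2 ∨ v = 0 ∨ v = 4)))

set_option synthInstance.maxSize 1024 in
instance : DecidableRel goldnerHarary.Adj := fun u v =>
  decidable_of_iff _ (SimpleGraph.fromRel_adj _ u v).symm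

set_option maxHeartbeats 2000000 in
/-- Vertices `5,…,10` form an independent set in the Goldner–Harary graph. -/
lemma gh_indep : ∀ u v : Fin 11, 5 ≤ u → 5 ≤ v → ¬ goldnerHarary.Adj u v := by decide

/-- No cyclic arrangement of all 11 vertices can have all (cyclically) consecutive
pairs adjacent: the independent set `5,…,10` has 6 elements, and shifting its 6
positions by one must land in the 5 positions of the complement. -/
lemma gh_aux (g : Fin 11 → Fin 11) (hbij : Function.Bijective g)
    (hadj : ∀ i : Fin 11, goldnerHarary.Adj (g i) (g (i + 1))) : False := by
  set A : Finset (Fin 11) := Finset.univ.filter (fun i => 5 ≤ g i) with hA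
  have hAcard : A.card = 6 := by
    have himg : A.image g = Finset.univ.filter (fun v : Fin 11 => 5 ≤ v) := by
      ext v
      simp only [Finset.mem_image, hA, Finset.mem_filter, Finset.mem_univ, true_and]
      constructor
      · rintro ⟨i, hi, rfl⟩; exact hi
      · intro hv
        obtain ⟨i, rfl⟩ := hbij.surjective v
        exact ⟨i, hv, rfl⟩
    have hc := Finset.card_image_of_injective A hbij.injective
    rw [himg] at hc
    rw [← hc]
    decide
  have hshift : A.image (· + 1) ⊆ Aᶜ := by
    intro j hj
    simp only [Finset.mem_image] at hj
    obtain ⟨i, hi, rfl⟩ := hj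
    simp only [hA, Finset.mem_compl, Finset.mem_filter, Finset.mem_univ, true_and] at hi ⊢
    intro hmem
    exact gh_indep _ _ hi hmem (hadj i)
  have h1 : (A.image (· + 1)).card = 6 := by
    rw [Finset.card_image_of_injective _ (add_left_injective 1), hAcard]
  have h2 : Aᶜ.card = 5 := by
    rw [Finset.card_compl, hAcard]
    rfl
  have := Finset.card_le_card hshift
  omega

set_option maxHeartbeats 2000000 in
/-- The Goldner–Harary graph is not Hamiltonian. -/
theorem goldnerHarary_not_isHamiltonian : ¬ goldnerHarary.IsHamiltonian := by
  intro h
  obtain ⟨a, p, hp⟩ := h (by simp)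
  have hlen : p.length = 11 := by simpa using hp.length_eq
  have hslen : p.support.length = 12 := by
    rw [SimpleGraph.Walk.length_support, hlen]
  have htlen : p.support.tail.length = 11 := by rw [List.length_tail, hslen]
  have hcount : ∀ v, p.support.tail.count v = 1 :=
    ((SimpleGraph.Walk.isHamiltonianCycle_iff_isCycle_and_support_count_tail_eq_one).mp hp).2
  have hnodup : p.support.tail.Nodup :=
    List.nodup_iff_count_le_one.mpr (fun v => (hcount v).le)
  -- consecutive vertices of the support are adjacent
  have hchain : ∀ (i : ℕ) (hi : i < 11),
      goldnerHarary.Adj (p.support.get ⟨i, by omega⟩) (p.support.get ⟨i + 1, by omega⟩) := by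
    have hc := List.isChain_iff_getElem.mp p.isChain_adj_support
    intro i hi
    exact hc i (by omega)
  -- first and last entries of the support are `a`
  have h0 : p.support.get ⟨0, by omega⟩ = a := by
    have hh := p.head_support
    rw [List.head_eq_getElem_zero] at hh
    simpa using hh
  have h11 : p.support.get ⟨11, by omega⟩ = a := by
    have hh := p.getLast_support
    rw [List.getLast_eq_getElem] at hh
    have he : p.support.length - 1 = 11 := by omega
    simp only [he] at hh
    simpa using hh
  have hgtail : ∀ (i : ℕ) (hi : i < 11),
      p.support.tail.get ⟨i, by omega⟩ = p.support.get ⟨i + 1, by omega⟩ := by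
    intro i hi
    exact List.get_tail p.support i (by omega) (by omega)
  refine gh_aux (fun i => p.support.tail.get ⟨i.val, by omega⟩) ⟨?_, ?_⟩ ?_
  · -- injective
    intro i j hij
    simp only at hij
    have := hnodup.get_inj_iff.mp hij
    have hval : i.val = j.val := by injection this
    exact Fin.ext hval
  · -- surjective
    intro v
    have hv : v ∈ p.support.tail := List.count_pos_iff.mp (by rw [hcount v]; omega)
    obtain ⟨⟨k, hk⟩, hgk⟩ := List.get_of_mem hv
    exact ⟨⟨k, by omega⟩, hgk⟩
  · -- cyclically adjacent
    intro i
    rcases Nat.lt_or_ge i.val 10 with hi | hi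
    · have hval : (i + 1).val = i.val + 1 := by
        rw [Fin.add_def]
        simp only [Fin.val_one]
        omega
      rw [hgtail i.val (by omega)]
      rw [show (⟨(i+1).val, by omega⟩ : Fin p.support.tail.length) =
            ⟨i.val + 1, by omega⟩ from by simp [hval]]
      rw [hgtail (i.val + 1) (by omega)]
      exact hchain (i.val + 1) (by omega)
    · have hi10 : i.val = 10 := by omega
      have hval : (i + 1).val = 0 := by
        rw [Fin.add_def]
        simp only [Fin.val_one]
        omega
      rw [hgtail i.val (by omega)]
      rw [show (⟨(i+1).val, by omega⟩ : Fin p.support.tail.length) =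
            ⟨0, by omega⟩ from by simp [hval]]
      rw [hgtail 0 (by omega)]
      rw [show (⟨i.val + 1, by omega⟩ : Fin p.support.length) = ⟨11, by omega⟩ from by simp [hi10]]
      rw [h11]
      have hc0 := hchain 0 (by omega)
      rw [h0] at hc0
      exact hc0
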